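/- Let (X,ρ) be a metric space, r̃ ∈ (0,1), and a ≤ ã ≤ b positive integers. Let K₁, …, K_a be pairwise disjoint finite subsets of X such that any two distinct points of ⋃_{j=1}^{a} K_j have distance at least 3r̃. Let K̃₁ ⊆ K̃₂ ⊆ ⋯ ⊆ K̃_{ã} be subsets of X with ⋃_{j=1}^{n} K_j ⊆ K̃_n for n = 1, …, a and K̃_{ã} = ⋃_{j=1}^{a} K_j. Let L₁ ⊆ L₂ ⊆ ⋯ ⊆ L_b be finite subsets of X with Hausdorff distance d(L_n, K̃_n) ≤ r̃ for every n = 1, …, ã. Then every x ∈ L_{ã} has a unique point p(x) ∈ ⋃_{j=1}^{a} K_j with ρ(x, p(x)) ≤ r̃ (its parent). For x ∈ L_b let n₂(x) denote the least n with x ∈ L_n. If for n = 1, …, a one defines L̃_n = { x ∈ L_{ã} : the least m with p(x) ∈ K̃_m equals n₂(x), and p(x) ∈ K_n }, then the Hausdorff distance satisfies d(L̃_n, K_n) ≤ r̃ for every n = 1, …, a. -/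
import Mathlib


open Metric

open scoped Classical in
/-- The Hausdorff distance between subsets of a metric space, with the convention that
`hDist A ∅ = hDist ∅ A = 1` whenever `A` is nonempty. -/
noncomputable def hDist {X : Type*} [MetricSpace X] (A B : Set X) : ℝ :=
  if A.Nonempty ↔ B.Nonempty then Metric.hausdorffDist A B else 1

lemma hDist_elim {X : Type*} [MetricSpace X] {A B : Set X} {r : ℝ} (hr : r < 1)
    (h : hDist A B ≤ r) : (A.Nonempty ↔ B.Nonempty) ∧ Metric.hausdorffDist A B ≤ r := by
  classical
  unfold hDist at h
  split_ifs at h with hiff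
  · exact ⟨hiff, h⟩
  · linarith

lemma find_close {X : Type*} [MetricSpace X] {A : Set X} {r : ℝ} (hA : A.Finite)
    (hne : A.Nonempty) {x : X} (h : Metric.infDist x A ≤ r) : ∃ z ∈ A, dist x z ≤ r := by
  obtain ⟨z, hz, hd⟩ := hA.isCompact.exists_infDist_eq_dist hne x
  exact ⟨z, hz, by rw [← hd]; exact h⟩

/-- Let `(X,ρ)` be a metric space, `r' ∈ (0,1)` (written `r̃` in the
paper), and `a ≤ a' ≤ b` positive integers (`a' ` is written `ã`). Let `K₁, …, K_a` be
pairwise disjoint finite subsets of `X` such that any two distinct points of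
`⋃_{j=1}^a Kⱼ` have distance at least `3r'`. Let `K'₁ ⊆ ⋯ ⊆ K'_{a'}` (written `K̃ₙ`) be
subsets with `⋃_{j=1}^n Kⱼ ⊆ K'ₙ` for `n = 1, …, a` and `K'_{a'} = ⋃_{j=1}^a Kⱼ`.
Let `L₁ ⊆ ⋯ ⊆ L_b` be finite subsets with `d(Lₙ, K'ₙ) ≤ r'` for `n = 1, …, a'`. Then every
`x ∈ L_{a'}` has a unique parent `p(x) ∈ ⋃_{j=1}^a Kⱼ` with `ρ(x, p(x)) ≤ r'`; and with
`n₂(x)` the least `n` with `x ∈ Lₙ` and `m₁(x)` the least `m` with `p(x) ∈ K'ₘ`, defining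
`L'ₙ = {x ∈ L_{a'} : m₁(x) = n₂(x) and p(x) ∈ Kₙ}` one has `d(L'ₙ, Kₙ) ≤ r'` for
`n = 1, …, a`. -/
theorem stmt_7 {X : Type*} [MetricSpace X] (r' : ℝ) (hr : r' ∈ Set.Ioo (0:ℝ) 1)
    (a a' b : ℕ) (ha : 0 < a) (haa' : a ≤ a') (ha'b : a' ≤ b)
    (K : ℕ → Set X)
    (hKfin : ∀ n, 1 ≤ n → n ≤ a → (K n).Finite)
    (hKdisj : ∀ m n, 1 ≤ m → m < n → n ≤ a → Disjoint (K m) (K n))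
    (hKsep : ∀ x ∈ ⋃ j ∈ Set.Icc 1 a, K j, ∀ y ∈ ⋃ j ∈ Set.Icc 1 a, K j,
      x ≠ y → 3 * r' ≤ dist x y)
    (K' : ℕ → Set X)
    (hK'mono : ∀ m n, 1 ≤ m → m ≤ n → n ≤ a' → K' m ⊆ K' n)
    (hKK' : ∀ n, 1 ≤ n → n ≤ a → (⋃ j ∈ Set.Icc 1 n, K j) ⊆ K' n)
    (hK'top : K' a' = ⋃ j ∈ Set.Icc 1 a, K j)
    (L : ℕ → Set X)
    (hLfin : ∀ n, 1 ≤ n → n ≤ b → (L n).Finite)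
    (hLmono : ∀ m n, 1 ≤ m → m ≤ n → n ≤ b → L m ⊆ L n)
    (hdL : ∀ n, 1 ≤ n → n ≤ a' → hDist (L n) (K' n) ≤ r') :
    (∀ x ∈ L a', ∃! y, y ∈ ⋃ j ∈ Set.Icc 1 a, K j ∧ dist x y ≤ r') ∧
    ∀ (p : X → X) (n₂ m₁ : X → ℕ),
      (∀ x ∈ L a', p x ∈ ⋃ j ∈ Set.Icc 1 a, K j ∧ dist x (p x) ≤ r') →
      (∀ x ∈ L b, x ∈ L (n₂ x) ∧ 1 ≤ n₂ x ∧ n₂ x ≤ b ∧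
        ∀ m, 1 ≤ m → m ≤ b → x ∈ L m → n₂ x ≤ m) →
      (∀ x ∈ L a', p x ∈ K' (m₁ x) ∧ 1 ≤ m₁ x ∧ m₁ x ≤ a' ∧
        ∀ m, 1 ≤ m → m ≤ a' → p x ∈ K' m → m₁ x ≤ m) →
      ∀ n, 1 ≤ n → n ≤ a →
        hDist {x ∈ L a' | m₁ x = n₂ x ∧ p x ∈ K n} (K n) ≤ r' := by
  classical
  obtain ⟨hr0, hr1⟩ := hr
  have ha1 : 1 ≤ a := ha
  have ha'1 : 1 ≤ a' := ha1.trans haa'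
  have hUfin : (⋃ j ∈ Set.Icc 1 a, K j).Finite :=
    Set.Finite.biUnion (Set.finite_Icc 1 a) (fun j hj => hKfin j hj.1 hj.2)
  have hK'fin : ∀ n, 1 ≤ n → n ≤ a' → (K' n).Finite := fun n h1 h2 =>
    hUfin.subset (by rw [← hK'top]; exact hK'mono n a' h1 h2 le_rfl)
  -- uniqueness of nearby points in the union
  have huniq : ∀ x : X, ∀ y ∈ ⋃ j ∈ Set.Icc 1 a, K j, ∀ z ∈ ⋃ j ∈ Set.Icc 1 a, K j,
      dist x y ≤ r' → dist x z ≤ r' → y = z := by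
    intro x y hy z hz hdy hdz
    by_contra hne
    have h3 := hKsep y hy z hz hne
    have htri : dist y z ≤ dist y x + dist x z := dist_triangle y x z
    rw [dist_comm] at hdy
    linarith
  -- every point of L at a given level 1 ≤ m ≤ a' has a point of ⋃ K within r'
  have hexists : ∀ m, 1 ≤ m → m ≤ a' → ∀ x ∈ L m,
      ∃ z ∈ K' m, z ∈ (⋃ j ∈ Set.Icc 1 a, K j) ∧ dist x z ≤ r' := by
    intro m h1 h2 x hx
    have hd := hDist_elim hr1 (hdL m h1 h2)
    have hK'ne : (K' m).Nonempty := hd.1.mp ⟨x, hx⟩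
    have hLf : (L m).Finite := hLfin m h1 (h2.trans ha'b)
    have hedist : EMetric.hausdorffEdist (L m) (K' m) ≠ ⊤ :=
      Metric.hausdorffEdist_ne_top_of_nonempty_of_bounded ⟨x, hx⟩ hK'ne
        hLf.isBounded (hK'fin m h1 h2).isBounded
    have hinf : Metric.infDist x (K' m) ≤ r' :=
      le_trans (Metric.infDist_le_hausdorffDist_of_mem hx hedist) hd.2
    obtain ⟨z, hz, hdz⟩ := find_close (hK'fin m h1 h2) hK'ne hinf
    refine ⟨z, hz, ?_, hdz⟩
    rw [← hK'top]; exact hK'mono m a' h1 h2 le_rfl hz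
  have key : ∀ x ∈ L a', ∃! y, y ∈ (⋃ j ∈ Set.Icc 1 a, K j) ∧ dist x y ≤ r' := by
    intro x hx
    obtain ⟨z, _, hzU, hdz⟩ := hexists a' ha'1 le_rfl x hx
    exact ⟨z, ⟨hzU, hdz⟩, fun y hy => huniq x y hy.1 z hzU hy.2 hdz⟩
  refine ⟨key, ?_⟩
  intro p n₂ m₁ hp hn₂ hm₁ n hn1 hna
  set U := ⋃ j ∈ Set.Icc 1 a, K j with hU
  -- sublemma: m₁ x ≤ n₂ x for x ∈ L a'
  have hA : ∀ x ∈ L a', m₁ x ≤ n₂ x := by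
    intro x hx
    have hxb : x ∈ L b := hLmono a' b ha'1 ha'b le_rfl hx
    obtain ⟨hxL, h1, _, hmin⟩ := hn₂ x hxb
    have hn₂a' : n₂ x ≤ a' := hmin a' ha'1 ha'b hx
    obtain ⟨z, hzK', hzU, hdz⟩ := hexists (n₂ x) h1 hn₂a' x hxL
    obtain ⟨hpU, hdp⟩ := hp x hx
    have : p x = z := huniq x (p x) hpU z hzU hdp hdz
    have hpK' : p x ∈ K' (n₂ x) := this ▸ hzK'
    exact (hm₁ x hx).2.2.2 (n₂ x) h1 hn₂a' hpK'
  -- the key covering property: every y ∈ K n has x ∈ L'_n with dist x y ≤ r'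
  have hcover : ∀ y ∈ K n, ∃ x, (x ∈ L a' ∧ m₁ x = n₂ x ∧ p x ∈ K n) ∧ dist x y ≤ r' := by
    intro y hy
    have hyU : y ∈ U := Set.mem_biUnion ⟨hn1, hna⟩ hy
    have hyK'n : y ∈ K' n := hKK' n hn1 hna (Set.mem_biUnion ⟨hn1, le_rfl⟩ hy)
    have hP : ∃ m, 1 ≤ m ∧ m ≤ a' ∧ y ∈ K' m := ⟨n, hn1, hna.trans haa', hyK'n⟩
    set m₀ := Nat.find hP with hm₀
    obtain ⟨hm₀1, hm₀a', hyK'm₀⟩ := Nat.find_spec hP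
    -- get x ∈ L m₀ close to y
    have hd := hDist_elim hr1 (hdL m₀ hm₀1 hm₀a')
    have hLne : (L m₀).Nonempty := hd.1.mpr ⟨y, hyK'm₀⟩
    have hLf : (L m₀).Finite := hLfin m₀ hm₀1 (hm₀a'.trans ha'b)
    have hedist : EMetric.hausdorffEdist (K' m₀) (L m₀) ≠ ⊤ :=
      Metric.hausdorffEdist_ne_top_of_nonempty_of_bounded ⟨y, hyK'm₀⟩ hLne
        (hK'fin m₀ hm₀1 hm₀a').isBounded hLf.isBounded
    have hinf : Metric.infDist y (L m₀) ≤ r' := by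
      refine le_trans (Metric.infDist_le_hausdorffDist_of_mem hyK'm₀ hedist) ?_
      rw [Metric.hausdorffDist_comm]; exact hd.2
    obtain ⟨x, hxL, hdx⟩ := find_close hLf hLne hinf
    have hxa' : x ∈ L a' := hLmono m₀ a' hm₀1 hm₀a' ha'b hxL
    obtain ⟨hpU, hdp⟩ := hp x hxa'
    have hpy : p x = y := huniq x (p x) hpU y hyU hdp (by rw [dist_comm]; exact hdx)
    -- m₁ x = m₀
    obtain ⟨hpK', hm₁1, hm₁a', hm₁min⟩ := hm₁ x hxa'
    have h1 : m₁ x ≤ m₀ := hm₁min m₀ hm₀1 hm₀a' (hpy ▸ hyK'm₀)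
    have h2 : m₀ ≤ m₁ x := Nat.find_le ⟨hm₁1, hm₁a', hpy ▸ hpK'⟩
    have hm₁eq : m₁ x = m₀ := le_antisymm h1 h2
    -- n₂ x ≤ m₀
    have hxb : x ∈ L b := hLmono a' b ha'1 ha'b le_rfl hxa'
    have hn₂le : n₂ x ≤ m₀ := (hn₂ x hxb).2.2.2 m₀ hm₀1 (hm₀a'.trans ha'b) hxL
    have heq : m₁ x = n₂ x := le_antisymm (hA x hxa') (hn₂le.trans_eq hm₁eq.symm)
    exact ⟨x, ⟨hxa', heq, hpy ▸ hy⟩, by rw [dist_comm]; exact hdx⟩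
  -- conclude
  set L' := {x ∈ L a' | m₁ x = n₂ x ∧ p x ∈ K n} with hL'
  have hmem : ∀ x, x ∈ L' ↔ x ∈ L a' ∧ m₁ x = n₂ x ∧ p x ∈ K n := fun x => Iff.rfl
  by_cases hKne : (K n).Nonempty
  · obtain ⟨y₀, hy₀⟩ := hKne
    obtain ⟨x₀, hx₀, _⟩ := hcover y₀ hy₀
    have hiff : L'.Nonempty ↔ (K n).Nonempty := ⟨fun _ => ⟨y₀, hy₀⟩, fun _ => ⟨x₀, hx₀⟩⟩
    rw [hDist, if_pos hiff]
    refine Metric.hausdorffDist_le_of_infDist hr0.le ?_ ?_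
    · rintro x ⟨hx, _, hpK⟩
      exact le_trans (Metric.infDist_le_dist_of_mem hpK) (hp x hx).2
    · intro y hy
      obtain ⟨x, hx, hdx⟩ := hcover y hy
      exact le_trans (Metric.infDist_le_dist_of_mem (hx : x ∈ L')) (by rw [dist_comm]; exact hdx)
  · have hL'e : L' = ∅ := by
      ext x
      simp only [hmem, Set.mem_empty_iff_false, iff_false]
      rintro ⟨_, _, hpK⟩
      exact hKne ⟨p x, hpK⟩
    have hKe : K n = ∅ := Set.not_nonempty_iff_eq_empty.mp hKne
    rw [hDist, hL'e, hKe, if_pos (by simp), Metric.hausdorffDist_empty']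
    exact hr0.le
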